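/- Let u : ℝ² → ℝ be a C² function solving L_u(L_u u) = 0 on ℝ², and let A(c) := (L_u u)(c,0) and B(c) := u(c,0) (which are differentiable since u is C²). Then for every c ∈ ℝ, either (A'(c) = 0 and B'(c) = 0) or B'(c)² < 2·A'(c). -/

import Mathlib

/-- The operator `L_u` acting on `v`:  `(L_u v)(x,t) = ∂v/∂t + u·∂v/∂x`,
with coordinates `(x,t)` on `ℝ × ℝ`. -/
noncomputable def Lop (u v : ℝ × ℝ → ℝ) : ℝ × ℝ → ℝ :=
  fun p => fderiv ℝ v p (0, 1) + u p * fderiv ℝ v p (1, 0)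

open Set Real

lemma w_contDiff {u : ℝ × ℝ → ℝ} (hu : ContDiff ℝ 2 u) : ContDiff ℝ 1 (Lop u u) := by
  have hD : ContDiff ℝ 1 (fderiv ℝ u) := hu.fderiv_right (by norm_num)
  exact (hD.clm_apply contDiff_const).add
    ((hu.of_le one_le_two).mul (hD.clm_apply contDiff_const))

lemma ux_cont {u : ℝ × ℝ → ℝ} (hu : ContDiff ℝ 1 u) (v : ℝ × ℝ) :
    Continuous fun p => fderiv ℝ u p v :=
  ((ContinuousLinearMap.apply ℝ ℝ v).continuous).comp (hu.continuous_fderiv (by norm_num))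

lemma gron {F F' : ℝ → ℝ × ℝ} {K T : ℝ} (hT : 0 ≤ T)
    (hd : ∀ s ∈ Icc 0 T, HasDerivAt F (F' s) s) (h0 : F 0 = 0)
    (hbd : ∀ s ∈ Icc 0 T, ‖F' s‖ ≤ K * ‖F s‖) : F T = 0 := by
  have h := norm_le_gronwallBound_of_norm_deriv_right_le (f := F) (f' := F') (δ := 0)
    (K := K) (ε := 0) (a := 0) (b := T)
    (fun s hs => ((hd s hs).continuousAt).continuousWithinAt)
    (fun s hs => ((hd s (Ico_subset_Icc_self hs)).hasDerivWithinAt))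
    (by simp [h0])
    (fun s hs => by simpa using hbd s (Ico_subset_Icc_self hs))
  have := h T (by simp [hT])
  rw [gronwallBound_ε0_δ0] at this
  simpa using norm_le_zero_iff.mp this

lemma clm_expand (L : ℝ × ℝ →L[ℝ] ℝ) (v1 v2 : ℝ) :
    L (v1, v2) = v1 * L (1, 0) + v2 * L (0, 1) := by
  have h : (v1, v2) = v1 • ((1:ℝ), (0:ℝ)) + v2 • ((0:ℝ), (1:ℝ)) := by simp
  rw [h, map_add, map_smul, map_smul, smul_eq_mul, smul_eq_mul]

lemma key {u : ℝ × ℝ → ℝ} (hu : ContDiff ℝ 2 u)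
    (hpde : ∀ p : ℝ × ℝ, Lop u (Lop u u) p = 0) (c t : ℝ) :
    u (c + u (c, 0) * t + Lop u u (c, 0) * t ^ 2 / 2, t)
      = u (c, 0) + Lop u u (c, 0) * t := by
  set w : ℝ × ℝ → ℝ := Lop u u with hwdef
  set b : ℝ := u (c, 0) with hbdef
  set a : ℝ := w (c, 0) with hadef
  have hudiff : Differentiable ℝ u := hu.differentiable (by norm_num)
  have hwC1 : ContDiff ℝ 1 w := w_contDiff hu
  have hwdiff : Differentiable ℝ w := hwC1.differentiable (by norm_num)
  set γ : ℝ → ℝ × ℝ := fun s => (c + b * s + a * s ^ 2 / 2, s) with hγdef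
  set f : ℝ → ℝ × ℝ := fun s => (u (γ s) - b - a * s, w (γ s) - a) with hfdef
  set f' : ℝ → ℝ × ℝ := fun s =>
    ((w (γ s) - a) - (u (γ s) - b - a * s) * fderiv ℝ u (γ s) (1, 0),
      -((u (γ s) - b - a * s) * fderiv ℝ w (γ s) (1, 0))) with hf'def
  have hγ : ∀ s, HasDerivAt γ (b + a * s, 1) s := by
    intro s
    have h1 : HasDerivAt (fun s : ℝ => c + b * s + a * s ^ 2 / 2)
        (0 + b * 1 + a * (↑2 * s ^ 1) / 2) s :=
      ((hasDerivAt_const s c).add ((hasDerivAt_id s).const_mul b)).add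
        (((hasDerivAt_pow 2 s).const_mul a).div_const 2)
    have h1' : HasDerivAt (fun s : ℝ => c + b * s + a * s ^ 2 / 2) (b + a * s) s := by
      convert h1 using 1; ring
    exact h1'.prodMk (hasDerivAt_id s)
  have hf' : ∀ s, HasDerivAt f (f' s) s := by
    intro s
    have hcu : HasDerivAt (fun s => u (γ s)) (fderiv ℝ u (γ s) (b + a * s, 1)) s :=
      (hudiff (γ s)).hasFDerivAt.comp_hasDerivAt s (hγ s)
    have hcw : HasDerivAt (fun s => w (γ s)) (fderiv ℝ w (γ s) (b + a * s, 1)) s :=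
      (hwdiff (γ s)).hasFDerivAt.comp_hasDerivAt s (hγ s)
    have h1 : HasDerivAt (fun s => u (γ s) - b - a * s)
        (fderiv ℝ u (γ s) (b + a * s, 1) - a) s := by
      have := (hcu.sub_const b).sub ((hasDerivAt_id s).const_mul a)
      simpa [Pi.sub_def] using this
    have h2 : HasDerivAt (fun s => w (γ s) - a)
        (fderiv ℝ w (γ s) (b + a * s, 1)) s := hcw.sub_const a
    have hwrel : fderiv ℝ u (γ s) (0, 1)
        = w (γ s) - u (γ s) * fderiv ℝ u (γ s) (1, 0) := by
      have h : w (γ s) = fderiv ℝ u (γ s) (0, 1) + u (γ s) * fderiv ℝ u (γ s) (1, 0) := rfl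
      linarith
    have hprel : fderiv ℝ w (γ s) (0, 1)
        = -(u (γ s) * fderiv ℝ w (γ s) (1, 0)) := by
      have h' : fderiv ℝ w (γ s) (0, 1) + u (γ s) * fderiv ℝ w (γ s) (1, 0) = 0 :=
        hpde (γ s)
      linarith
    have heq : f' s = (fderiv ℝ u (γ s) (b + a * s, 1) - a,
        fderiv ℝ w (γ s) (b + a * s, 1)) := by
      have e1 := clm_expand (fderiv ℝ u (γ s)) (b + a * s) 1
      have e2 := clm_expand (fderiv ℝ w (γ s)) (b + a * s) 1
      show ((w (γ s) - a) - (u (γ s) - b - a * s) * fderiv ℝ u (γ s) (1, 0),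
        -((u (γ s) - b - a * s) * fderiv ℝ w (γ s) (1, 0))) = _
      refine Prod.ext ?_ ?_ <;> simp only [e1, e2, hwrel, hprel] <;> ring
    rw [heq]
    exact h1.prodMk h2
  -- bounds on a compact set
  set T : ℝ := |t| with hTdef
  have hT0 : 0 ≤ T := abs_nonneg t
  set R : ℝ := |b| * T + |a| * T ^ 2 / 2 with hRdef
  have hR0 : 0 ≤ R := by positivity
  set Cs : Set (ℝ × ℝ) := Icc (c - R) (c + R) ×ˢ Icc (-T) T with hCdef
  have hCcomp : IsCompact Cs := (isCompact_Icc).prod isCompact_Icc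
  have hmem : ∀ s ∈ Icc (-T) T, γ s ∈ Cs := by
    intro s hs
    obtain ⟨hs1, hs2⟩ := hs
    have habs : |s| ≤ T := abs_le.mpr ⟨hs1, hs2⟩
    have h1 : |b * s + a * s ^ 2 / 2| ≤ R := by
      calc |b * s + a * s ^ 2 / 2| ≤ |b * s| + |a * s ^ 2 / 2| := abs_add_le _ _
      _ ≤ |b| * T + |a| * T ^ 2 / 2 := by
          rw [abs_mul, abs_div, abs_mul]
          have h2 : |s ^ 2| ≤ T ^ 2 := by
            rw [abs_pow]; exact pow_le_pow_left₀ (abs_nonneg s) habs 2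
          have h3 : (|2| : ℝ) = 2 := by norm_num
          rw [h3]
          have h4 := mul_le_mul_of_nonneg_left h2 (abs_nonneg a)
          nlinarith [mul_le_mul_of_nonneg_left habs (abs_nonneg b)]
    rw [abs_le] at h1
    refine ⟨?_, ?_⟩
    · show c + b * s + a * s ^ 2 / 2 ∈ Icc (c - R) (c + R)
      rw [mem_Icc]
      constructor <;> linarith [h1.1, h1.2]
    · show s ∈ Icc (-T) T
      exact ⟨hs1, hs2⟩
  obtain ⟨M1, hM1⟩ := hCcomp.exists_bound_of_continuousOn
    ((ux_cont (hu.of_le one_le_two) (1, 0)).continuousOn)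
  obtain ⟨M2, hM2⟩ := hCcomp.exists_bound_of_continuousOn
    ((ux_cont hwC1 (1, 0)).continuousOn)
  have hCs_ne : γ 0 ∈ Cs := hmem 0 (by constructor <;> linarith)
  set M : ℝ := max M1 M2 with hMdef
  have hM0 : 0 ≤ M := le_trans (norm_nonneg _) (le_trans (hM1 _ hCs_ne) (le_max_left _ _))
  set K : ℝ := 1 + M with hKdef
  have hbound : ∀ s ∈ Icc (-T) T, ‖f' s‖ ≤ K * ‖f s‖ := by
    intro s hs
    have hm := hmem s hs
    have hux : |fderiv ℝ u (γ s) (1, 0)| ≤ M := le_trans (hM1 _ hm) (le_max_left _ _)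
    have hwx : |fderiv ℝ w (γ s) (1, 0)| ≤ M := le_trans (hM2 _ hm) (le_max_right _ _)
    have he1 : |u (γ s) - b - a * s| ≤ ‖f s‖ := by
      have h := norm_fst_le (f s)
      rwa [show (f s).1 = u (γ s) - b - a * s from rfl, Real.norm_eq_abs] at h
    have he2 : |w (γ s) - a| ≤ ‖f s‖ := by
      have h := norm_snd_le (f s)
      rwa [show (f s).2 = w (γ s) - a from rfl, Real.norm_eq_abs] at h
    have hn1 : |(f' s).1| ≤ K * ‖f s‖ := by
      rw [show (f' s).1
        = (w (γ s) - a) - (u (γ s) - b - a * s) * fderiv ℝ u (γ s) (1, 0) from rfl]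
      calc |(w (γ s) - a) - (u (γ s) - b - a * s) * fderiv ℝ u (γ s) (1, 0)|
          ≤ |w (γ s) - a| + |(u (γ s) - b - a * s) * fderiv ℝ u (γ s) (1, 0)| :=
            abs_sub _ _
        _ = |w (γ s) - a| + |u (γ s) - b - a * s| * |fderiv ℝ u (γ s) (1, 0)| := by
            rw [abs_mul]
        _ ≤ ‖f s‖ + ‖f s‖ * M := by
            refine add_le_add he2 (mul_le_mul he1 hux (abs_nonneg _) (norm_nonneg _))
        _ = K * ‖f s‖ := by rw [hKdef]; ring
    have hn2 : |(f' s).2| ≤ K * ‖f s‖ := by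
      rw [show (f' s).2
        = -((u (γ s) - b - a * s) * fderiv ℝ w (γ s) (1, 0)) from rfl]
      rw [abs_neg, abs_mul]
      have h5 : |u (γ s) - b - a * s| * |fderiv ℝ w (γ s) (1, 0)| ≤ ‖f s‖ * M :=
        mul_le_mul he1 hwx (abs_nonneg _) (norm_nonneg _)
      nlinarith [norm_nonneg (f s)]
    have hn : ‖f' s‖ = max |(f' s).1| |(f' s).2| := by
      rw [Prod.norm_def, Real.norm_eq_abs, Real.norm_eq_abs]
    rw [hn]
    exact max_le hn1 hn2
  have h0 : f 0 = 0 := by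
    have hγ0 : γ 0 = (c, 0) := by
      show (c + b * 0 + a * 0 ^ 2 / 2, (0:ℝ)) = (c, 0)
      norm_num
    show (u (γ 0) - b - a * 0, w (γ 0) - a) = 0
    rw [hγ0]
    rw [show u (c, 0) = b from rfl, show w (c, 0) = a from rfl]
    norm_num [Prod.ext_iff]
  have hgoal : ∀ s, f s = 0 → u (c + b * s + a * s ^ 2 / 2, s) = b + a * s := by
    intro s hfs
    have h2 : u (γ s) - b - a * s = 0 := congrArg Prod.fst hfs
    have h3 : u (γ s) = b + a * s := by linarith
    exact h3
  rcases le_or_gt 0 t with ht | ht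
  · refine hgoal t (gron ht (fun s _ => hf' s) h0 (fun s hs => hbound s ?_))
    exact ⟨by linarith [hs.1], le_trans hs.2 (le_abs_self t)⟩
  · have hT : T = -t := abs_of_neg ht
    have hdF : ∀ s, HasDerivAt (f ∘ (fun x : ℝ => -x)) ((-1 : ℝ) • f' (-s)) s :=
      fun s => HasDerivAt.scomp (x := s) (h := fun x : ℝ => -x) (hf' (-s)) (hasDerivAt_neg' s)
    have hmemneg : ∀ s ∈ Icc (0:ℝ) (-t), -s ∈ Icc (-T) T := by
      intro s hs
      constructor
      · rw [hT]; linarith [hs.2]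
      · rw [hT]; linarith [hs.1, ht]
    have hFt := gron (T := -t) (by linarith) (fun s _ => hdF s)
      (by show f (-0) = 0; rw [neg_zero]; exact h0)
      (fun s hs => by
        rw [norm_smul]
        simp only [norm_neg, norm_one]
        simpa using hbound (-s) (hmemneg s hs))
    have : f t = 0 := by
      have h := hFt
      simp only [Function.comp_apply, neg_neg] at h
      exact h
    exact hgoal t this

theorem stmt3 (u : ℝ × ℝ → ℝ) (hu : ContDiff ℝ 2 u)
    (hpde : ∀ p : ℝ × ℝ, Lop u (Lop u u) p = 0)
    (A B : ℝ → ℝ) (hA : ∀ c, A c = Lop u u (c, 0)) (hB : ∀ c, B c = u (c, 0)) :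
    ∀ c : ℝ, (deriv A c = 0 ∧ deriv B c = 0) ∨ (deriv B c) ^ 2 < 2 * deriv A c := by
  intro c
  have hudiff : Differentiable ℝ u := hu.differentiable (by norm_num)
  have hwC1 : ContDiff ℝ 1 (Lop u u) := w_contDiff hu
  have hwdiff : Differentiable ℝ (Lop u u) := hwC1.differentiable (by norm_num)
  have hBeq : B = fun x => u (x, 0) := funext hB
  have hAeq : A = fun x => Lop u u (x, 0) := funext hA
  have hcurve : ∀ x : ℝ, HasDerivAt (fun y : ℝ => (y, (0:ℝ))) ((1:ℝ), (0:ℝ)) x :=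
    fun x => (hasDerivAt_id x).prodMk (hasDerivAt_const x 0)
  have hBder : HasDerivAt B (fderiv ℝ u (c, 0) (1, 0)) c := by
    rw [hBeq]
    exact (hudiff (c, 0)).hasFDerivAt.comp_hasDerivAt c (hcurve c)
  have hAder : HasDerivAt A (fderiv ℝ (Lop u u) (c, 0) (1, 0)) c := by
    rw [hAeq]
    exact (hwdiff (c, 0)).hasFDerivAt.comp_hasDerivAt c (hcurve c)
  have hb' : HasDerivAt B (deriv B c) c := by rw [hBder.deriv]; exact hBder
  have ha' : HasDerivAt A (deriv A c) c := by rw [hAder.deriv]; exact hAder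
  have hKey : ∀ (x t : ℝ), u (x + B x * t + A x * t ^ 2 / 2, t) = B x + A x * t := by
    intro x t; rw [hA x, hB x]; exact key hu hpde x t
  have hid : ∀ t : ℝ, fderiv ℝ u (c + B c * t + A c * t ^ 2 / 2, t) (1, 0)
      * (1 + deriv B c * t + deriv A c * t ^ 2 / 2) = deriv B c + deriv A c * t := by
    intro t
    have hXder : HasDerivAt (fun x => x + B x * t + A x * t ^ 2 / 2)
        (1 + deriv B c * t + deriv A c * t ^ 2 / 2) c :=
      ((hasDerivAt_id c).add (hb'.mul_const t)).add ((ha'.mul_const (t ^ 2)).div_const 2)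
    have hγder : HasDerivAt (fun x => (x + B x * t + A x * t ^ 2 / 2, t))
        ((1 + deriv B c * t + deriv A c * t ^ 2 / 2), (0:ℝ)) c :=
      hXder.prodMk (hasDerivAt_const c t)
    have hLHS : HasDerivAt (fun x => u (x + B x * t + A x * t ^ 2 / 2, t))
        (fderiv ℝ u (c + B c * t + A c * t ^ 2 / 2, t)
          ((1 + deriv B c * t + deriv A c * t ^ 2 / 2), 0)) c :=
      (hudiff _).hasFDerivAt.comp_hasDerivAt c hγder
    have hRHS : HasDerivAt (fun x => B x + A x * t) (deriv B c + deriv A c * t) c :=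
      hb'.add (ha'.mul_const t)
    have hfuneq : (fun x => u (x + B x * t + A x * t ^ 2 / 2, t))
        = fun x => B x + A x * t := funext fun x => hKey x t
    rw [hfuneq] at hLHS
    have huniq := hLHS.unique hRHS
    rw [clm_expand] at huniq
    linear_combination huniq
  set a : ℝ := deriv A c with hadef
  set b : ℝ := deriv B c with hbdef
  set q : ℝ → ℝ := fun t => fderiv ℝ u (c + B c * t + A c * t ^ 2 / 2, t) (1, 0) with hqdef
  have hqt : ∀ s : ℝ, q s = fderiv ℝ u (c + B c * s + A c * s ^ 2 / 2, s) (1, 0) :=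
    fun s => by rw [hqdef]
  have hid' : ∀ t : ℝ, q t * (1 + b * t + a * t ^ 2 / 2) = b + a * t := by
    intro t; rw [hqt t]; exact hid t
  by_cases hA0 : a = 0
  · by_cases hB0 : b = 0
    · left; exact ⟨hA0, hB0⟩
    · exfalso
      have hval : (1 : ℝ) + b * (-1 / b) + a * (-1 / b) ^ 2 / 2 = 0 := by
        rw [hA0]; field_simp; ring
      have h := hid' (-1 / b)
      rw [hval, mul_zero, hA0, zero_mul] at h
      exact hB0 (by linarith)
  · right
    by_contra hcon
    push_neg at hcon
    rcases lt_or_eq_of_le hcon with hgt | heqc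
    · -- 2a < b^2 : two distinct roots
      have hd2 : Real.sqrt (b ^ 2 - 2 * a) ^ 2 = b ^ 2 - 2 * a :=
        Real.sq_sqrt (by linarith)
      have hdpos : 0 < Real.sqrt (b ^ 2 - 2 * a) := Real.sqrt_pos.mpr (by linarith)
      set d : ℝ := Real.sqrt (b ^ 2 - 2 * a) with hddef
      have hroot : 1 + b * ((-b + d) / a) + a * ((-b + d) / a) ^ 2 / 2 = 0 := by
        field_simp
        linear_combination hd2
      have hl : b + a * ((-b + d) / a) = d := by field_simp; ring
      have h := hid' ((-b + d) / a)
      rw [hroot, mul_zero, hl] at h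
      linarith
    · -- b^2 = 2a : double root, contradiction via continuity of q
      have hapos : 0 < a := by
        rcases lt_or_gt_of_ne hA0 with h | h
        · nlinarith [sq_nonneg b]
        · exact h
      have hq0 : ContinuousAt q (-b / a) := by
        rw [hqdef]
        apply Continuous.continuousAt
        apply (ux_cont (hu.of_le one_le_two) (1, 0)).comp
        fun_prop
      obtain ⟨δ, hδpos, hδ⟩ := Metric.continuousAt_iff.mp hq0 1 one_pos
      set X : ℝ := |q (-b / a)| with hXdef
      have hX0 : 0 ≤ X := abs_nonneg _
      set ε : ℝ := min (δ / 2) (1 / (X + 2)) with hεdef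
      have hεpos : 0 < ε := lt_min (by linarith) (by positivity)
      have hεδ : ε < δ := lt_of_le_of_lt (min_le_left _ _) (by linarith)
      have hεle : ε * (X + 2) ≤ 1 := by
        have := min_le_right (δ / 2) (1 / (X + 2))
        rw [← hεdef] at this
        calc ε * (X + 2) ≤ (1 / (X + 2)) * (X + 2) :=
              mul_le_mul_of_nonneg_right this (by positivity)
          _ = 1 := by field_simp
      have hp : 1 + b * (-b / a + ε) + a * (-b / a + ε) ^ 2 / 2 = a / 2 * ε ^ 2 := by
        field_simp
        linear_combination heqc
      have hl : b + a * (-b / a + ε) = a * ε := by field_simp; ring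
      have h := hid' (-b / a + ε)
      rw [hp, hl] at h
      have hcanc : q (-b / a + ε) * ε * (a * ε) = 2 * (a * ε) := by
        linear_combination 2 * h
      have hqeq : q (-b / a + ε) * ε = 2 :=
        mul_right_cancel₀ (mul_ne_zero hA0 hεpos.ne') hcanc
      have hdist : dist (-b / a + ε) (-b / a) < δ := by
        rw [Real.dist_eq]
        rw [show (-b / a + ε) - (-b / a) = ε by ring]
        rw [abs_of_pos hεpos]
        exact hεδ
      have hlt := hδ hdist
      rw [Real.dist_eq] at hlt
      have h2 : |q (-b / a + ε)| ≤ X + 1 := by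
        have h3 := abs_sub_abs_le_abs_sub (q (-b / a + ε)) (q (-b / a))
        rw [← hXdef] at h3
        linarith
      have h4 : |q (-b / a + ε)| * ε = 2 := by
        rw [abs_of_pos]
        · exact hqeq
        · nlinarith
      nlinarith [mul_le_mul_of_nonneg_right h2 hεpos.le]
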